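/- If ε ≤ V(x) for all x, then ∑_y [G(0,y)G(y,x)/G(0,x)]² ≤ A_ε (ρ(x)+1), i.e., the squared ℓ² norm of the gradient of log G(0,x) with respect to the potential is bounded by a constant times ρ(x)+1. -/

import Mathlib

open Matrix Finset Real


lemma pow_entry_nonneg {ι : Type} [Fintype ι] [DecidableEq ι] (M : Matrix ι ι ℝ)
    (h0 : ∀ i j, 0 ≤ M i j) : ∀ (n : ℕ) (i j : ι), 0 ≤ (M ^ n) i j := by
  intro n
  induction n with
  | zero => intro i j; simp [Matrix.one_apply]; positivity
  | succ n ih =>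
    intro i j
    rw [pow_succ, Matrix.mul_apply]
    exact Finset.sum_nonneg fun z _ => mul_nonneg (ih i z) (h0 z j)

lemma pow_row_le {ι : Type} [Fintype ι] [DecidableEq ι] (M : Matrix ι ι ℝ) (r : ℝ)
    (h0 : ∀ i j, 0 ≤ M i j) (hrow : ∀ i, ∑ j, M i j ≤ r) (hr0 : 0 ≤ r) :
    ∀ (n : ℕ) (i : ι), ∑ j, (M ^ n) i j ≤ r ^ n := by
  intro n
  induction n with
  | zero => intro i; simp [Matrix.one_apply]
  | succ n ih =>
    intro i
    have : ∑ j, (M ^ (n+1)) i j = ∑ z, (M ^ n) i z * ∑ j, M z j := by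
      simp only [pow_succ, Matrix.mul_apply, Finset.mul_sum]
      exact Finset.sum_comm
    rw [this, pow_succ]
    calc ∑ z, (M ^ n) i z * ∑ j, M z j ≤ ∑ z, (M ^ n) i z * r := by
          refine Finset.sum_le_sum fun z _ => ?_
          exact mul_le_mul_of_nonneg_left (hrow z) (pow_entry_nonneg M h0 n i z)
      _ = (∑ z, (M ^ n) i z) * r := by rw [Finset.sum_mul]
      _ ≤ r ^ n * r := mul_le_mul_of_nonneg_right (ih i) hr0

lemma pow_entry_le {ι : Type} [Fintype ι] [DecidableEq ι] (M : Matrix ι ι ℝ) (r : ℝ)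
    (h0 : ∀ i j, 0 ≤ M i j) (hrow : ∀ i, ∑ j, M i j ≤ r) (hr0 : 0 ≤ r)
    (n : ℕ) (i j : ι) : (M ^ n) i j ≤ r ^ n :=
  le_trans (Finset.single_le_sum (fun z _ => pow_entry_nonneg M h0 n i z) (Finset.mem_univ j))
    (pow_row_le M r h0 hrow hr0 n i)

lemma neumann_split {ι : Type} [Fintype ι] [DecidableEq ι] (M P : Matrix ι ι ℝ)
    (hP : (1 - M) * P = 1) (n : ℕ) :
    P = (∑ k ∈ Finset.range n, M ^ k) + M ^ n * P := by
  have g : (∑ k ∈ Finset.range n, M ^ k) * (1 - M) = 1 - M ^ n := by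
    have h := geom_sum_mul M n
    have : (∑ k ∈ Finset.range n, M ^ k) * (1 - M)
        = -((∑ k ∈ Finset.range n, M ^ k) * (M - 1)) := by
      rw [mul_sub, mul_sub, mul_one]; abel
    rw [this, h]; abel
  calc P = 1 * P := (one_mul P).symm
    _ = ((1 - M ^ n) + M ^ n) * P := by rw [sub_add_cancel]
    _ = ((∑ k ∈ Finset.range n, M ^ k) * (1 - M) + M ^ n) * P := by rw [g]
    _ = (∑ k ∈ Finset.range n, M ^ k) * ((1 - M) * P) + M ^ n * P := by
        rw [add_mul, mul_assoc]
    _ = (∑ k ∈ Finset.range n, M ^ k) + M ^ n * P := by rw [hP, mul_one]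

lemma comb_sum (w : ℕ → ℝ) (hw : ∀ k, 0 ≤ w k) (n : ℕ) :
    ∑ a ∈ Finset.range n, ∑ b ∈ Finset.range n, w (a + b)
      ≤ ∑ k ∈ Finset.range (2 * n), ((k : ℝ) + 1) * w k := by
  rw [← Finset.sum_product' (Finset.range n) (Finset.range n) (fun a b => w (a + b))]
  have hdisj : (↑(Finset.range (2 * n)) : Set ℕ).PairwiseDisjoint
      (fun k => Finset.HasAntidiagonal.antidiagonal k) := by
    intro a _ b _ hab
    refine Finset.disjoint_left.mpr fun p hpa hpb => hab ?_
    rw [Finset.HasAntidiagonal.mem_antidiagonal] at hpa hpb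
    omega
  have hsub : Finset.range n ×ˢ Finset.range n ⊆
      (Finset.range (2 * n)).biUnion (fun k => Finset.HasAntidiagonal.antidiagonal k) := by
    intro p hp
    rw [Finset.mem_product, Finset.mem_range, Finset.mem_range] at hp
    refine Finset.mem_biUnion.mpr ⟨p.1 + p.2, Finset.mem_range.mpr (by omega), ?_⟩
    rw [Finset.HasAntidiagonal.mem_antidiagonal]
  calc ∑ p ∈ Finset.range n ×ˢ Finset.range n, w (p.1 + p.2)
      ≤ ∑ p ∈ (Finset.range (2 * n)).biUnion (fun k => Finset.HasAntidiagonal.antidiagonal k), w (p.1 + p.2) :=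
        Finset.sum_le_sum_of_subset_of_nonneg hsub (fun p _ _ => hw _)
    _ = ∑ k ∈ Finset.range (2 * n), ∑ p ∈ Finset.HasAntidiagonal.antidiagonal k, w (p.1 + p.2) :=
        Finset.sum_biUnion hdisj
    _ = ∑ k ∈ Finset.range (2 * n), ((k : ℝ) + 1) * w k := by
        refine Finset.sum_congr rfl fun k _ => ?_
        have : ∀ p ∈ Finset.HasAntidiagonal.antidiagonal k, w (p.1 + p.2) = w k := by
          intro p hp; rw [Finset.HasAntidiagonal.mem_antidiagonal] at hp; rw [hp]
        rw [Finset.sum_congr rfl this, Finset.sum_const, Finset.Nat.card_antidiagonal]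
        simp [nsmul_eq_mul]

lemma geo_partial (q : ℝ) (hq0 : 0 ≤ q) (hq1 : q < 1) (n : ℕ) :
    ∑ k ∈ Finset.range n, q ^ k ≤ (1 - q)⁻¹ := by
  rw [geom_sum_eq (ne_of_lt hq1)]
  have h1 : (q ^ n - 1) / (q - 1) = (1 - q ^ n) / (1 - q) := by
    rw [← neg_div_neg_eq]; ring_nf
  rw [h1, ← one_div]
  have hd : (0:ℝ) < 1 - q := by linarith
  gcongr
  have : 0 ≤ q ^ n := pow_nonneg hq0 n
  linarith

lemma inv_nonneg_aux {ι : Type} [Fintype ι] [DecidableEq ι] (B : Matrix ι ι ℝ)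
    (dd : ι → ℝ) (N : Matrix ι ι ℝ) (r : ℝ) (hr0 : 0 ≤ r) (hr1 : r < 1)
    (hdd : ∀ i, 0 < dd i) (hN : ∀ i j, 0 ≤ N i j)
    (hrow : ∀ i, ∑ j, N i j ≤ r * dd i)
    (hB : B = Matrix.diagonal dd - N) (hU : IsUnit B.det) :
    ∀ i j, 0 ≤ B⁻¹ i j := by
  set M : Matrix ι ι ℝ := Matrix.diagonal (fun i => (dd i)⁻¹) * N with hM
  have hM0 : ∀ i j, 0 ≤ M i j := by
    intro i j; rw [hM, Matrix.diagonal_mul]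
    exact mul_nonneg (inv_nonneg.mpr (hdd i).le) (hN i j)
  have hMrow : ∀ i, ∑ j, M i j ≤ r := by
    intro i
    have : ∑ j, M i j = (dd i)⁻¹ * ∑ j, N i j := by
      simp [hM, Matrix.diagonal_mul, Finset.mul_sum]
    rw [this]
    rw [inv_mul_le_iff₀ (hdd i)]
    calc ∑ j, N i j ≤ r * dd i := hrow i
      _ = dd i * r := mul_comm _ _
  have h1m : 1 - M = Matrix.diagonal (fun i => (dd i)⁻¹) * B := by
    ext i j
    rw [hB, Matrix.diagonal_mul, Matrix.sub_apply, Matrix.sub_apply, Matrix.diagonal_apply,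
      Matrix.one_apply, hM, Matrix.diagonal_mul]
    by_cases h : i = j <;> simp [h, mul_sub]
    · rw [inv_mul_cancel₀ (hdd j).ne']
  set Q : Matrix ι ι ℝ := B⁻¹ * Matrix.diagonal dd with hQ
  have hQ2 : (1 - M) * Q = 1 := by
    rw [h1m, hQ]
    calc Matrix.diagonal (fun i => (dd i)⁻¹) * B * (B⁻¹ * Matrix.diagonal dd)
        = Matrix.diagonal (fun i => (dd i)⁻¹) * (B * B⁻¹) * Matrix.diagonal dd := by
          rw [Matrix.mul_assoc, Matrix.mul_assoc, Matrix.mul_assoc]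
      _ = Matrix.diagonal (fun i => (dd i)⁻¹) * Matrix.diagonal dd := by
          rw [Matrix.mul_nonsing_inv _ hU, Matrix.mul_one]
      _ = 1 := by
          rw [Matrix.diagonal_mul_diagonal]
          convert Matrix.diagonal_one
          exact inv_mul_cancel₀ (hdd _).ne'
  -- Q nonneg via partial sums
  have hQnn : ∀ i j, 0 ≤ Q i j := by
    intro i j
    set Kb : ℝ := ∑ a, ∑ b, |Q a b| with hKb
    have hKbnn : ∀ a b, |Q a b| ≤ Kb := by
      intro a b
      calc |Q a b| ≤ ∑ b', |Q a b'| :=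
            Finset.single_le_sum (f := fun b' => |Q a b'|) (fun z _ => abs_nonneg _)
              (Finset.mem_univ b)
        _ ≤ Kb := Finset.single_le_sum (f := fun a => ∑ b', |Q a b'|)
            (fun z _ => Finset.sum_nonneg fun z' _ => abs_nonneg _) (Finset.mem_univ a)
    have hKb0 : 0 ≤ Kb := le_trans (abs_nonneg _) (hKbnn i j)
    have key : ∀ n : ℕ, -(Kb * r ^ n) ≤ Q i j := by
      intro n
      have hsplit := neumann_split M Q hQ2 n
      have h1 : Q i j = (∑ k ∈ Finset.range n, M ^ k) i j + (M ^ n * Q) i j := by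
        conv_lhs => rw [hsplit]
        simp [Matrix.add_apply]
      have h2 : 0 ≤ (∑ k ∈ Finset.range n, M ^ k) i j := by
        rw [Matrix.sum_apply]
        exact Finset.sum_nonneg fun k _ => pow_entry_nonneg M hM0 k i j
      have h3 : -(Kb * r ^ n) ≤ (M ^ n * Q) i j := by
        rw [Matrix.mul_apply]
        have : ∀ z ∈ Finset.univ, -((M ^ n) i z * |Q z j|) ≤ (M ^ n) i z * Q z j := by
          intro z _
          have := neg_abs_le (Q z j)
          nlinarith [pow_entry_nonneg M hM0 n i z, abs_nonneg (Q z j)]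
        calc -(Kb * r ^ n) ≤ -(∑ z, (M ^ n) i z * |Q z j|) := by
              rw [neg_le_neg_iff]
              calc ∑ z, (M ^ n) i z * |Q z j| ≤ ∑ z, (M ^ n) i z * Kb := by
                    refine Finset.sum_le_sum fun z _ => ?_
                    exact mul_le_mul_of_nonneg_left (hKbnn z j) (pow_entry_nonneg M hM0 n i z)
                _ = (∑ z, (M ^ n) i z) * Kb := by rw [Finset.sum_mul]
                _ ≤ r ^ n * Kb :=
                    mul_le_mul_of_nonneg_right (pow_row_le M r hM0 hMrow hr0 n i) hKb0
                _ = Kb * r ^ n := mul_comm _ _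
          _ = ∑ z, -((M ^ n) i z * |Q z j|) := by rw [← Finset.sum_neg_distrib]
          _ ≤ ∑ z, (M ^ n) i z * Q z j := Finset.sum_le_sum this
      linarith [h1, h2, h3]
    have htend : Filter.Tendsto (fun n : ℕ => -(Kb * r ^ n)) Filter.atTop (nhds 0) := by
      have := (tendsto_pow_atTop_nhds_zero_of_lt_one hr0 hr1).const_mul Kb
      simpa using this.neg
    exact le_of_tendsto' htend key
  intro i j
  have hBinv : B⁻¹ = Q * Matrix.diagonal (fun i => (dd i)⁻¹) := by
    rw [hQ, Matrix.mul_assoc, Matrix.diagonal_mul_diagonal]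
    have : (Matrix.diagonal fun i => dd i * (dd i)⁻¹) = 1 := by
      convert Matrix.diagonal_one
      exact mul_inv_cancel₀ (hdd _).ne'
    rw [this, Matrix.mul_one]
  rw [hBinv, Matrix.mul_diagonal]
  exact mul_nonneg (hQnn i j) (inv_nonneg.mpr (hdd j).le)

lemma schur_ineq {ι : Type} [Fintype ι] [DecidableEq ι] (H G : Matrix ι ι ℝ)
    (dd : ι → ℝ) (N : Matrix ι ι ℝ) (r : ℝ) (hr0 : 0 ≤ r) (hr1 : r < 1)
    (hdd : ∀ i, 0 < dd i) (hN : ∀ i j, 0 ≤ N i j)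
    (hrow : ∀ i, ∑ j, N i j ≤ r * dd i)
    (hH : H = Matrix.diagonal dd - N)
    (hHG : H * G = 1) (hGpos : ∀ i j, 0 < G i j)
    (a y b : ι) : G a y * G y b ≤ G y y * G a b := by
  by_cases hay : a = y
  · subst hay; rw [mul_comm]
  by_cases hby : b = y
  · subst hby; rw [mul_comm]
  -- subtype
  set S := {i : ι // i ≠ y}
  set H' : Matrix S S ℝ := H.submatrix (fun i : S => (i : ι)) (fun i : S => (i : ι)) with hH'
  set R : Matrix S S ℝ := fun p q => G (p : ι) (q : ι) - G (p : ι) y * G y (q : ι) / G y y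
    with hR
  have hGyy : 0 < G y y := hGpos y y
  -- H' * R = 1
  have hsum : ∀ (g : ι → ℝ), g y = 0 → ∑ j : S, g (j : ι) = ∑ j, g j := by
    intro g hgy
    rw [Fintype.sum_eq_sum_compl_add y g, hgy, add_zero]
    rw [Finset.sum_subtype (p := fun i => i ≠ y) ({y}ᶜ : Finset ι) (fun x => by simp) g]
  have hHR : H' * R = 1 := by
    ext p q
    rw [Matrix.mul_apply]
    have hterm : ∀ j : S, H' p j * R j q
        = H (p : ι) (j : ι) * (G (j : ι) (q : ι) - G (j : ι) y * G y (q : ι) / G y y) := by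
      intro j; rfl
    rw [Finset.sum_congr rfl (fun j _ => hterm j)]
    rw [hsum (fun j => H (p : ι) j * (G j (q : ι) - G j y * G y (q : ι) / G y y))
      (by field_simp; ring)]
    have expand : ∀ j, H (p : ι) j * (G j (q : ι) - G j y * G y (q : ι) / G y y)
        = H (p : ι) j * G j (q : ι) - (H (p : ι) j * G j y) * (G y (q : ι) / G y y) := by
      intro j; ring
    rw [Finset.sum_congr rfl (fun j _ => expand j), Finset.sum_sub_distrib, ← Finset.sum_mul]
    have h1 : ∑ j, H (p : ι) j * G j (q : ι) = (1 : Matrix ι ι ℝ) (p : ι) (q : ι) := by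
      rw [← Matrix.mul_apply, hHG]
    have h2 : ∑ j, H (p : ι) j * G j y = (1 : Matrix ι ι ℝ) (p : ι) y := by
      rw [← Matrix.mul_apply, hHG]
    rw [h1, h2]
    have h3 : (1 : Matrix ι ι ℝ) (p : ι) y = 0 := by
      rw [Matrix.one_apply]; simp [p.2]
    rw [h3, zero_mul, sub_zero]
    rw [Matrix.one_apply, Matrix.one_apply]
    by_cases hpq : p = q
    · simp [hpq]
    · have : (p : ι) ≠ (q : ι) := fun h => hpq (Subtype.ext h)
      simp [hpq, this]
  have hU : IsUnit H'.det := Matrix.isUnit_det_of_right_inverse hHR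
  have hinv : H'⁻¹ = R := Matrix.inv_eq_right_inv hHR
  have hnn := inv_nonneg_aux H' (fun i : S => dd (i : ι))
    (N.submatrix (fun i : S => (i : ι)) (fun i : S => (i : ι))) r hr0 hr1
    (fun i => hdd _) (fun i j => hN _ _) ?_ ?_ hU
  · have := hnn ⟨a, hay⟩ ⟨b, hby⟩
    rw [hinv] at this
    have h0 : 0 ≤ G a b - G a y * G y b / G y y := this
    rw [sub_nonneg, div_le_iff₀ hGyy] at h0
    calc G a y * G y b ≤ G a b * G y y := h0
      _ = G y y * G a b := mul_comm _ _
  · intro i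
    have hle : ∑ j : S, N (i : ι) (j : ι) ≤ ∑ j, N (i : ι) j := by
      rw [Fintype.sum_eq_sum_compl_add y (fun j => N (i : ι) j),
        Finset.sum_subtype (p := fun i => i ≠ y) ({y}ᶜ : Finset ι) (fun x => by simp)
          (fun j => N (i : ι) j)]
      have : (0:ℝ) ≤ N (i : ι) y := hN _ _
      linarith
    exact le_trans hle (hrow _)
  · ext p q
    simp only [hH', Matrix.submatrix_apply, hH, Matrix.sub_apply, Matrix.diagonal_apply]
    congr 1
    by_cases hpq : p = q
    · simp [hpq]
    · have : (p : ι) ≠ (q : ι) := fun h => hpq (Subtype.ext h)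
      simp [hpq, this]

lemma key_bound {ι : Type} [Fintype ι] [DecidableEq ι] (K P : Matrix ι ι ℝ)
    (r c m C₁ W Sb : ℝ) (hr0 : 0 ≤ r) (hr1 : r < 1)
    (hK0 : ∀ i j, 0 ≤ K i j) (hKrow : ∀ i, ∑ j, K i j ≤ r)
    (hP2 : (1 - K) * P = 1) (hP0 : ∀ i j, 0 ≤ P i j)
    (hPentry : ∀ i j, P i j ≤ Sb) (hSb : 0 ≤ Sb)
    (x₀ x : ι) (hW : W = P x₀ x) (hc : 0 < c) (hm : 0 ≤ m) (hC₁ : 0 ≤ C₁)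
    (hgeo : ∀ n, ∑ k ∈ Finset.range n, Real.exp (c * (k + 1)) * (K ^ k) x₀ x ≤ C₁) :
    (P * P) x₀ x ≤ m * W + c⁻¹ * Real.exp (-(c * m)) * C₁ := by
  classical
  set w : ℕ → ℝ := fun k => (K ^ k) x₀ x with hw
  have hw0 : ∀ k, 0 ≤ w k := fun k => pow_entry_nonneg K hK0 k x₀ x
  -- partial sums of w bounded by W
  have hWsum : ∀ n, ∑ k ∈ Finset.range n, w k ≤ W := by
    intro n
    have hs := neumann_split K P hP2 n
    have h1 : W = (∑ k ∈ Finset.range n, K ^ k) x₀ x + (K ^ n * P) x₀ x := by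
      rw [hW]; conv_lhs => rw [hs]
      simp [Matrix.add_apply]
    have h2 : 0 ≤ (K ^ n * P) x₀ x := by
      rw [Matrix.mul_apply]
      exact Finset.sum_nonneg fun z _ => mul_nonneg (pow_entry_nonneg K hK0 n x₀ z) (hP0 z x)
    have h3 : (∑ k ∈ Finset.range n, K ^ k) x₀ x = ∑ k ∈ Finset.range n, w k := by
      rw [Matrix.sum_apply]
    linarith
  -- pointwise: (k+1) ≤ m + c⁻¹ exp(-(c m)) exp(c(k+1))
  have hpoint : ∀ k : ℕ, ((k : ℝ) + 1) ≤ m + c⁻¹ * (Real.exp (-(c * m)) * Real.exp (c * (k + 1))) := by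
    intro k
    set u : ℝ := ((k : ℝ) + 1) - m with hu
    have h1 : c * u ≤ Real.exp (c * u) := by
      have := Real.add_one_le_exp (c * u)
      linarith
    have h2 : u ≤ c⁻¹ * Real.exp (c * u) := by
      have h2' := mul_le_mul_of_nonneg_left h1 (inv_nonneg.mpr hc.le)
      have heq : c⁻¹ * (c * u) = u := by field_simp
      rw [heq] at h2'
      exact h2'
    have h3 : Real.exp (c * u) = Real.exp (-(c * m)) * Real.exp (c * (k + 1)) := by
      rw [← Real.exp_add]; congr 1; rw [hu]; ring
    rw [h3] at h2
    linarith [h2]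
  -- main bound per n
  have main : ∀ n : ℕ, (P * P) x₀ x
      ≤ m * W + c⁻¹ * Real.exp (-(c * m)) * C₁
        + 3 * (Fintype.card ι) * Sb ^ 2 * r ^ n := by
    intro n
    set Sn : Matrix ι ι ℝ := ∑ k ∈ Finset.range n, K ^ k with hSn
    set Q : Matrix ι ι ℝ := K ^ n * P with hQdef
    have hsplit : P = Sn + Q := neumann_split K P hP2 n
    have hSn0 : ∀ i j, 0 ≤ Sn i j := by
      intro i j
      rw [hSn, Matrix.sum_apply]
      exact Finset.sum_nonneg fun k _ => pow_entry_nonneg K hK0 k i j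
    have hQ0 : ∀ i j, 0 ≤ Q i j := by
      intro i j
      rw [hQdef, Matrix.mul_apply]
      exact Finset.sum_nonneg fun z _ => mul_nonneg (pow_entry_nonneg K hK0 n i z) (hP0 z j)
    have hSnP : ∀ i j, Sn i j ≤ Sb := by
      intro i j
      have : P i j = Sn i j + Q i j := by rw [hsplit]; simp [Matrix.add_apply]
      have := hQ0 i j
      have := hPentry i j
      linarith
    have hQle : ∀ i j, Q i j ≤ r ^ n * Sb := by
      intro i j
      rw [hQdef, Matrix.mul_apply]
      calc ∑ z, (K ^ n) i z * P z j ≤ ∑ z, (K ^ n) i z * Sb := by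
            refine Finset.sum_le_sum fun z _ => ?_
            exact mul_le_mul_of_nonneg_left (hPentry z j) (pow_entry_nonneg K hK0 n i z)
        _ = (∑ z, (K ^ n) i z) * Sb := by rw [Finset.sum_mul]
        _ ≤ r ^ n * Sb := mul_le_mul_of_nonneg_right (pow_row_le K r hK0 hKrow hr0 n i) hSb
    have hrn1 : r ^ n ≤ 1 := pow_le_one₀ hr0 hr1.le
    have hrn0 : 0 ≤ r ^ n := pow_nonneg hr0 n
    -- expand product
    have hexp : P * P = Sn * Sn + (Sn * Q + (Q * Sn + Q * Q)) := by
      conv_lhs => rw [hsplit]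
      rw [add_mul, mul_add, mul_add]; abel
    have hentry : (P * P) x₀ x = (Sn * Sn) x₀ x + ((Sn * Q) x₀ x + ((Q * Sn) x₀ x + (Q * Q) x₀ x)) := by
      rw [hexp]; simp [Matrix.add_apply]
    -- error bounds
    have card0 : (0:ℝ) ≤ (Fintype.card ι : ℝ) := Nat.cast_nonneg _
    have e1 : (Sn * Q) x₀ x ≤ (Fintype.card ι) * Sb ^ 2 * r ^ n := by
      rw [Matrix.mul_apply]
      calc ∑ z, Sn x₀ z * Q z x ≤ ∑ z, Sb * (r ^ n * Sb) := by
            refine Finset.sum_le_sum fun z _ => ?_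
            exact mul_le_mul (hSnP x₀ z) (hQle z x) (hQ0 z x) hSb
        _ = (Fintype.card ι) * (Sb * (r ^ n * Sb)) := by
            rw [Finset.sum_const, Finset.card_univ, nsmul_eq_mul]
        _ = (Fintype.card ι) * Sb ^ 2 * r ^ n := by ring
    have e2 : (Q * Sn) x₀ x ≤ (Fintype.card ι) * Sb ^ 2 * r ^ n := by
      rw [Matrix.mul_apply]
      calc ∑ z, Q x₀ z * Sn z x ≤ ∑ z, (r ^ n * Sb) * Sb := by
            refine Finset.sum_le_sum fun z _ => ?_
            exact mul_le_mul (hQle x₀ z) (hSnP z x) (hSn0 z x) (by nlinarith)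
        _ = (Fintype.card ι) * ((r ^ n * Sb) * Sb) := by
            rw [Finset.sum_const, Finset.card_univ, nsmul_eq_mul]
        _ = (Fintype.card ι) * Sb ^ 2 * r ^ n := by ring
    have e3 : (Q * Q) x₀ x ≤ (Fintype.card ι) * Sb ^ 2 * r ^ n := by
      rw [Matrix.mul_apply]
      calc ∑ z, Q x₀ z * Q z x ≤ ∑ z, (r ^ n * Sb) * Sb := by
            refine Finset.sum_le_sum fun z _ => ?_
            have h1 := hQle x₀ z
            have h2 := hQle z x
            have h3 := hQ0 z x
            have h4 := hQ0 x₀ z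
            have h5 : r ^ n * Sb ≤ Sb := by nlinarith
            exact mul_le_mul h1 (h2.trans h5) h3 (by positivity)
        _ = (Fintype.card ι) * ((r ^ n * Sb) * Sb) := by
            rw [Finset.sum_const, Finset.card_univ, nsmul_eq_mul]
        _ = (Fintype.card ι) * Sb ^ 2 * r ^ n := by ring
    -- main term
    have hmain : (Sn * Sn) x₀ x ≤ m * W + c⁻¹ * Real.exp (-(c * m)) * C₁ := by
      have hSS : (Sn * Sn) x₀ x = ∑ a ∈ Finset.range n, ∑ b ∈ Finset.range n, w (a + b) := by
        rw [hSn, Finset.sum_mul_sum]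
        rw [Matrix.sum_apply]
        refine Finset.sum_congr rfl fun a _ => ?_
        rw [Matrix.sum_apply]
        refine Finset.sum_congr rfl fun b _ => ?_
        rw [← pow_add]
      rw [hSS]
      calc ∑ a ∈ Finset.range n, ∑ b ∈ Finset.range n, w (a + b)
          ≤ ∑ k ∈ Finset.range (2 * n), ((k : ℝ) + 1) * w k := comb_sum w hw0 n
        _ ≤ ∑ k ∈ Finset.range (2 * n),
            (m + c⁻¹ * (Real.exp (-(c * m)) * Real.exp (c * (k + 1)))) * w k := by
            refine Finset.sum_le_sum fun k _ => ?_
            exact mul_le_mul_of_nonneg_right (hpoint k) (hw0 k)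
        _ = m * (∑ k ∈ Finset.range (2 * n), w k)
            + c⁻¹ * Real.exp (-(c * m))
              * (∑ k ∈ Finset.range (2 * n), Real.exp (c * (k + 1)) * w k) := by
            rw [Finset.mul_sum, Finset.mul_sum, ← Finset.sum_add_distrib]
            refine Finset.sum_congr rfl fun k _ => ?_
            ring
        _ ≤ m * W + c⁻¹ * Real.exp (-(c * m)) * C₁ := by
            have g1 := hWsum (2 * n)
            have g2 := hgeo (2 * n)
            have hpos : 0 ≤ c⁻¹ * Real.exp (-(c * m)) :=
              mul_nonneg (inv_nonneg.mpr hc.le) (Real.exp_pos _).le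
            have := mul_le_mul_of_nonneg_left g2 hpos
            have := mul_le_mul_of_nonneg_left g1 hm
            linarith
    rw [hentry]
    have : (Sn * Q) x₀ x + ((Q * Sn) x₀ x + (Q * Q) x₀ x)
        ≤ 3 * (Fintype.card ι) * Sb ^ 2 * r ^ n := by linarith
    linarith
  -- limit
  have htend : Filter.Tendsto
      (fun n : ℕ => m * W + c⁻¹ * Real.exp (-(c * m)) * C₁ + 3 * (Fintype.card ι) * Sb ^ 2 * r ^ n)
      Filter.atTop (nhds (m * W + c⁻¹ * Real.exp (-(c * m)) * C₁)) := by
    have h := (tendsto_pow_atTop_nhds_zero_of_lt_one hr0 hr1).const_mul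
      (3 * (Fintype.card ι : ℝ) * Sb ^ 2)
    have := h.const_add (m * W + c⁻¹ * Real.exp (-(c * m)) * C₁)
    simpa using this
  exact ge_of_tendsto' htend main


set_option maxHeartbeats 1600000 in
/-- If `V ≥ ε > 0`, then `∑_y [G(0,y) G(y,x) / G(0,x)]² ≤ A_ε (ρ(x)+1)`:
the squared ℓ² norm of the gradient of `log G(0,x)` in the potential is bounded by a
constant (depending only on `ε` and `d`) times `ρ(x)+1`, uniformly over finite boxes. -/
theorem stmt10 (d : ℕ) (hd : 0 < d) (ε : ℝ) (hε : 0 < ε) :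
    ∃ C : ℝ, 0 < C ∧
      ∀ (ι : Type) [Fintype ι] [DecidableEq ι],
      ∀ (A : Matrix ι ι ℝ),
        (∀ i j, A i j = 0 ∨ A i j = 1) → A.IsSymm → (∀ i, A i i = 0) →
        (∀ i, ∑ j, A i j ≤ 2 * d) →
      ∀ (V : ι → ℝ), (∀ i, ε ≤ V i) →
      ∀ (H G : Matrix ι ι ℝ),
        H = 1 + Matrix.diagonal V - ((2 * d : ℝ))⁻¹ • A →
        IsUnit H.det → G = H⁻¹ → (∀ i j, 0 < G i j) →
      ∀ x₀ x : ι,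
        ∑ y, (G x₀ y * G y x / G x₀ x) ^ 2
          ≤ C * (Real.log (Real.sqrt (G x₀ x₀ * G x x) / G x₀ x) + 1) := by
  have hε1 : (0:ℝ) < 1 + ε := by linarith
  set r : ℝ := (1 + ε)⁻¹ with hrdef
  set c : ℝ := Real.log (1 + ε) / 2 with hcdef
  set Sb : ℝ := (1 - r)⁻¹ with hSbdef
  set C₁ : ℝ := Real.exp c * (1 - Real.exp (-c))⁻¹ with hC₁def
  have hr0 : 0 ≤ r := inv_nonneg.mpr hε1.le
  have hr1 : r < 1 := by
    rw [hrdef]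
    rw [inv_lt_one_iff₀]
    right; linarith
  have h1r : 0 < 1 - r := by linarith
  have hc : 0 < c := by
    rw [hcdef]
    have := Real.log_pos (by linarith : (1:ℝ) < 1 + ε)
    linarith
  have hSb0 : 0 < Sb := inv_pos.mpr h1r
  have hexpc : Real.exp (-c) < 1 := Real.exp_lt_one_iff.mpr (by linarith)
  have hC₁0 : 0 < C₁ := mul_pos (Real.exp_pos _) (inv_pos.mpr (by linarith))
  have hCpos : 0 < Sb * (1 + C₁) / c := by positivity
  refine ⟨Sb * (1 + C₁) / c, hCpos, ?_⟩
  intro ι _ _ A hA01 hAsymm hAdiag hArow V hV H G hH hdet hG hGpos x₀ x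
  classical
  have hA0 : ∀ i j, 0 ≤ A i j := by
    intro i j; rcases hA01 i j with h | h <;> rw [h] <;> norm_num
  have hdR : (0:ℝ) < (d:ℝ) := by exact_mod_cast hd
  have hd2 : (0:ℝ) < 2 * d := by linarith
  have hVi : ∀ i, 0 < 1 + V i := fun i => by have := hV i; linarith
  have hVe : ∀ i, 1 + ε ≤ 1 + V i := fun i => by have := hV i; linarith
  set e : ι → ℝ := fun i => Real.sqrt (1 + V i) with hedef
  have he0 : ∀ i, 0 < e i := fun i => Real.sqrt_pos.mpr (hVi i)
  have he2 : ∀ i, e i ^ 2 = 1 + V i := fun i => Real.sq_sqrt (hVi i).le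
  have he2' : ∀ i, e i * e i = 1 + V i := fun i => by have := he2 i; nlinarith
  have heprod : ∀ i j, 1 + ε ≤ e i * e j := by
    intro i j
    have h1 : Real.sqrt (1 + ε) ≤ e i := Real.sqrt_le_sqrt (hVe i)
    have h2 : Real.sqrt (1 + ε) ≤ e j := Real.sqrt_le_sqrt (hVe j)
    have h3 : Real.sqrt (1 + ε) * Real.sqrt (1 + ε) = 1 + ε := by
      have := Real.sq_sqrt hε1.le; nlinarith
    calc 1 + ε = Real.sqrt (1 + ε) * Real.sqrt (1 + ε) := h3.symm
      _ ≤ e i * e j := mul_le_mul h1 h2 (Real.sqrt_nonneg _) (he0 i).le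
  have HG : H * G = 1 := by rw [hG]; exact Matrix.mul_nonsing_inv H hdet
  have GH : G * H = 1 := by rw [hG]; exact Matrix.nonsing_inv_mul H hdet
  set Ei : Matrix ι ι ℝ := Matrix.diagonal e with hEidef
  set Einv : Matrix ι ι ℝ := Matrix.diagonal (fun i => (e i)⁻¹) with hEinvdef
  have hEE : Einv * Ei = 1 := by
    rw [hEinvdef, hEidef, Matrix.diagonal_mul_diagonal]
    convert Matrix.diagonal_one
    exact inv_mul_cancel₀ (he0 _).ne'
  have hEE' : Ei * Einv = 1 := by
    rw [hEinvdef, hEidef, Matrix.diagonal_mul_diagonal]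
    convert Matrix.diagonal_one
    exact mul_inv_cancel₀ (he0 _).ne'
  set P : Matrix ι ι ℝ := Ei * G * Ei with hPdef
  set K : Matrix ι ι ℝ := 1 - Einv * H * Einv with hKdef
  have h1K : 1 - K = Einv * H * Einv := by rw [hKdef]; abel
  have cancel1 : ∀ X : Matrix ι ι ℝ, Einv * (Ei * X) = X := fun X => by
    rw [← Matrix.mul_assoc, hEE, Matrix.one_mul]
  have hP2 : (1 - K) * P = 1 := by
    rw [h1K, hPdef]
    simp only [Matrix.mul_assoc]
    rw [cancel1 (G * Ei), ← Matrix.mul_assoc H G, HG, Matrix.one_mul, hEE]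
  have hP1 : P * (1 - K) = 1 := by
    rw [h1K, hPdef]
    simp only [Matrix.mul_assoc]
    rw [show Ei * (Einv * (H * Einv)) = H * Einv by rw [← Matrix.mul_assoc, hEE', Matrix.one_mul],
      ← Matrix.mul_assoc G H, GH, Matrix.one_mul, hEE']
  have hPapp : ∀ i j, P i j = e i * G i j * e j := by
    intro i j
    rw [hPdef, hEidef, Matrix.mul_diagonal, Matrix.diagonal_mul]
  have hPpos : ∀ i j, 0 < P i j := by
    intro i j; rw [hPapp]
    exact mul_pos (mul_pos (he0 i) (hGpos i j)) (he0 j)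
  have hP0 : ∀ i j, 0 ≤ P i j := fun i j => (hPpos i j).le
  have hKapp : ∀ i j, K i j = (2*(d:ℝ))⁻¹ * A i j * (e i * e j)⁻¹ := by
    intro i j
    have hH' : (Einv * H * Einv) i j = (e i)⁻¹ * H i j * (e j)⁻¹ := by
      rw [hEinvdef, Matrix.mul_diagonal, Matrix.diagonal_mul]
    have hKij : K i j = (1 : Matrix ι ι ℝ) i j - (e i)⁻¹ * H i j * (e j)⁻¹ := by
      rw [hKdef, Matrix.sub_apply, hH']
    rw [hKij, hH]
    simp only [Matrix.sub_apply, Matrix.add_apply, Matrix.one_apply, Matrix.diagonal_apply,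
      Matrix.smul_apply, smul_eq_mul]
    by_cases hij : i = j
    · subst hij
      rw [if_pos rfl, if_pos rfl, hAdiag i]
      have h : (e i)⁻¹ * (1 + V i) * (e i)⁻¹ = 1 := by
        rw [← he2' i,
          show (e i)⁻¹ * (e i * e i) * (e i)⁻¹ = ((e i)⁻¹ * e i) * (e i * (e i)⁻¹) from by ring,
          inv_mul_cancel₀ (he0 i).ne', mul_inv_cancel₀ (he0 i).ne', one_mul]
      simp only [mul_zero, sub_zero, zero_mul]
      rw [h, sub_self]
    · rw [if_neg hij, if_neg hij, mul_inv]
      ring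
  have hK0 : ∀ i j, 0 ≤ K i j := by
    intro i j; rw [hKapp]
    have : (0:ℝ) ≤ (e i * e j)⁻¹ := by positivity
    have := hA0 i j
    positivity
  have hKrow : ∀ i, ∑ j, K i j ≤ r := by
    intro i
    have step : ∀ j, K i j ≤ (2*(d:ℝ))⁻¹ * A i j * (1 + ε)⁻¹ := by
      intro j
      rw [hKapp]
      have h1 : (e i * e j)⁻¹ ≤ (1 + ε)⁻¹ := by
        apply inv_anti₀ hε1 (heprod i j)
      have h2 : (0:ℝ) ≤ (2*(d:ℝ))⁻¹ * A i j := by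
        have := hA0 i j; positivity
      exact mul_le_mul_of_nonneg_left h1 h2
    calc ∑ j, K i j ≤ ∑ j, (2*(d:ℝ))⁻¹ * A i j * (1 + ε)⁻¹ := Finset.sum_le_sum fun j _ => step j
      _ = (2*(d:ℝ))⁻¹ * (1 + ε)⁻¹ * ∑ j, A i j := by
          rw [Finset.mul_sum]; exact Finset.sum_congr rfl fun j _ => by ring
      _ ≤ (2*(d:ℝ))⁻¹ * (1 + ε)⁻¹ * (2*d) := by
          apply mul_le_mul_of_nonneg_left (hArow i)
          positivity
      _ = r := by rw [hrdef]; field_simp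
  have hPentry : ∀ i j, P i j ≤ Sb := by
    intro i j
    have hrow : ∑ z, P i z ≤ Sb := by
      have h1 : (1:ℝ) = ∑ z, P i z * (1 - ∑ b, K z b) := by
        have h2 : ∀ b, (P * (1 - K)) i b = (1 : Matrix ι ι ℝ) i b := fun b => by rw [hP1]
        have h3 : ∑ b, (1 : Matrix ι ι ℝ) i b = 1 := by
          simp [Matrix.one_apply]
        calc (1:ℝ) = ∑ b, (1 : Matrix ι ι ℝ) i b := h3.symm
          _ = ∑ b, (P * (1 - K)) i b := by
              exact Finset.sum_congr rfl fun b _ => (h2 b).symm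
          _ = ∑ b, ∑ z, P i z * (1 - K) z b := by
              exact Finset.sum_congr rfl fun b _ => Matrix.mul_apply
          _ = ∑ z, ∑ b, P i z * (1 - K) z b := Finset.sum_comm
          _ = ∑ z, P i z * (1 - ∑ b, K z b) := by
              refine Finset.sum_congr rfl fun z _ => ?_
              rw [← Finset.mul_sum]
              congr 1
              rw [show ∑ b, (1 - K) z b = ∑ b, ((1 : Matrix ι ι ℝ) z b - K z b) from
                Finset.sum_congr rfl fun b _ => rfl]
              rw [Finset.sum_sub_distrib]
              simp [Matrix.one_apply]
      have h4 : ∑ z, P i z * (1 - r) ≤ ∑ z, P i z * (1 - ∑ b, K z b) := by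
        refine Finset.sum_le_sum fun z _ => ?_
        apply mul_le_mul_of_nonneg_left _ (hP0 i z)
        have := hKrow z; linarith
      have h5 : (∑ z, P i z) * (1 - r) ≤ 1 := by
        rw [Finset.sum_mul]; linarith
      calc ∑ z, P i z = ((∑ z, P i z) * (1 - r)) * (1-r)⁻¹ := by field_simp
        _ ≤ 1 * (1-r)⁻¹ := by
            apply mul_le_mul_of_nonneg_right h5 (by positivity)
        _ = Sb := by rw [one_mul, hSbdef]
    calc P i j ≤ ∑ z, P i z := Finset.single_le_sum (fun z _ => hP0 i z) (Finset.mem_univ j)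
      _ ≤ Sb := hrow
  -- diagonal of P at least 1
  have hPdiag : ∀ i, 1 ≤ P i i := by
    intro i
    have hs := neumann_split K P hP2 1
    have h1 : P i i = (∑ k ∈ Finset.range 1, K ^ k) i i + (K ^ 1 * P) i i := by
      conv_lhs => rw [hs]
      simp [Matrix.add_apply]
    have h2 : (∑ k ∈ Finset.range 1, K ^ k) i i = 1 := by
      rw [Finset.range_one, Finset.sum_singleton, pow_zero, Matrix.one_apply_eq]
    have h3 : 0 ≤ (K ^ 1 * P) i i := by
      rw [Matrix.mul_apply]
      exact Finset.sum_nonneg fun z _ => mul_nonneg (pow_entry_nonneg K hK0 1 i z) (hP0 z i)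
    linarith
  -- symmetry of G
  have hHsymm : Hᵀ = H := by
    rw [hH]
    rw [Matrix.transpose_sub, Matrix.transpose_add, Matrix.transpose_one,
      Matrix.diagonal_transpose, Matrix.transpose_smul, hAsymm]
  have hGsymm : Gᵀ = G := by
    rw [hG, Matrix.transpose_nonsing_inv, hHsymm]
  have hGs : ∀ i j, G i j = G j i := by
    intro i j
    conv_lhs => rw [← hGsymm]
    rfl
  clear_value e Ei Einv P K
  have hHij : ∀ i j, H i j = (if i = j then 1 + V i else 0) - (2*(d:ℝ))⁻¹ * A i j := by
    intro i j
    rw [hH]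
    simp only [Matrix.sub_apply, Matrix.add_apply, Matrix.one_apply, Matrix.diagonal_apply,
      Matrix.smul_apply, smul_eq_mul]
    by_cases h : i = j <;> simp [h]
  -- positive definiteness of quadratic form of H
  have hHquadpos : ∀ v : ι → ℝ, v ≠ 0 → 0 < v ⬝ᵥ (H *ᵥ v) := by
    intro v hv
    have hcomp : ∀ i, (H *ᵥ v) i = (1 + V i) * v i - (2*(d:ℝ))⁻¹ * ∑ j, A i j * v j := by
      intro i
      have h0 : (H *ᵥ v) i = ∑ j, H i j * v j := by
        simp [Matrix.mulVec, dotProduct]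
      rw [h0, Finset.sum_congr rfl fun j _ => by rw [hHij i j]]
      have h1 : ∑ j, ((if i = j then 1 + V i else 0) - (2*(d:ℝ))⁻¹ * A i j) * v j
          = ∑ j, (if i = j then (1 + V i) * v j else 0)
            - ∑ j, (2*(d:ℝ))⁻¹ * (A i j * v j) := by
        rw [← Finset.sum_sub_distrib]
        refine Finset.sum_congr rfl fun j _ => ?_
        by_cases h : i = j <;> simp [h] <;> ring
      rw [h1, Finset.sum_ite_eq, ← Finset.mul_sum]
      simp
    have hform : v ⬝ᵥ (H *ᵥ v)
        = ∑ i, (1 + V i) * v i ^ 2 - (2*(d:ℝ))⁻¹ * ∑ i, ∑ j, A i j * v i * v j := by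
      have h0 : v ⬝ᵥ (H *ᵥ v) = ∑ i, v i * (H *ᵥ v) i := by
        simp [dotProduct]
      rw [h0, Finset.sum_congr rfl fun i _ => by rw [hcomp i]]
      rw [show ∑ i, (v i * ((1 + V i) * v i - (2*(d:ℝ))⁻¹ * ∑ j, A i j * v j))
          = ∑ i, (1 + V i) * v i ^ 2 - ∑ i, (v i * ((2*(d:ℝ))⁻¹ * ∑ j, A i j * v j)) from by
        rw [← Finset.sum_sub_distrib]
        exact Finset.sum_congr rfl fun i _ => by ring]
      congr 1
      simp only [Finset.mul_sum]
      refine Finset.sum_congr rfl fun i _ => ?_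
      exact Finset.sum_congr rfl fun j _ => by ring
    have hAv : ∑ i, ∑ j, A i j * v i * v j ≤ 2*(d:ℝ) * ∑ i, v i ^ 2 := by
      have step1 : ∑ i, ∑ j, A i j * v i * v j
          ≤ ∑ i, ∑ j, (A i j * v i ^ 2 + A i j * v j ^ 2) / 2 := by
        refine Finset.sum_le_sum fun i _ => Finset.sum_le_sum fun j _ => ?_
        have h1 := hA0 i j
        nlinarith [sq_nonneg (v i - v j)]
      have e1 : ∑ i, ∑ j, (A i j * v i ^ 2 + A i j * v j ^ 2) / 2
          = (∑ i, ∑ j, A i j * v i ^ 2) / 2 + (∑ i, ∑ j, A i j * v j ^ 2) / 2 := by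
        simp only [add_div, Finset.sum_add_distrib, Finset.sum_div]
      have b1 : ∑ i, ∑ j, A i j * v i ^ 2 ≤ 2*(d:ℝ) * ∑ i, v i ^ 2 := by
        calc ∑ i, ∑ j, A i j * v i ^ 2 = ∑ i, v i ^ 2 * ∑ j, A i j := by
              refine Finset.sum_congr rfl fun i _ => ?_
              rw [Finset.mul_sum]
              exact Finset.sum_congr rfl fun j _ => by ring
          _ ≤ ∑ i, v i ^ 2 * (2*(d:ℝ)) := by
              refine Finset.sum_le_sum fun i _ => ?_
              exact mul_le_mul_of_nonneg_left (hArow i) (sq_nonneg _)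
          _ = 2*(d:ℝ) * ∑ i, v i ^ 2 := by rw [← Finset.sum_mul]; ring
      have b2 : ∑ i, ∑ j, A i j * v j ^ 2 ≤ 2*(d:ℝ) * ∑ i, v i ^ 2 := by
        have hswap : ∑ i, ∑ j, A i j * v j ^ 2 = ∑ j, ∑ i, A i j * v j ^ 2 := Finset.sum_comm
        rw [hswap]
        calc ∑ j, ∑ i, A i j * v j ^ 2 = ∑ j, v j ^ 2 * ∑ i, A j i := by
              refine Finset.sum_congr rfl fun j _ => ?_
              rw [Finset.mul_sum]
              refine Finset.sum_congr rfl fun i _ => ?_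
              have hsym : A i j = A j i := by
                conv_lhs => rw [← hAsymm]
                rfl
              rw [hsym]; ring
          _ ≤ ∑ j, v j ^ 2 * (2*(d:ℝ)) := by
              refine Finset.sum_le_sum fun j _ => ?_
              exact mul_le_mul_of_nonneg_left (hArow j) (sq_nonneg _)
          _ = 2*(d:ℝ) * ∑ i, v i ^ 2 := by rw [← Finset.sum_mul]; ring
      calc ∑ i, ∑ j, A i j * v i * v j
          ≤ (∑ i, ∑ j, A i j * v i ^ 2) / 2 + (∑ i, ∑ j, A i j * v j ^ 2) / 2 := by
            rw [← e1]; exact step1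
        _ ≤ 2*(d:ℝ) * ∑ i, v i ^ 2 := by linarith
    have hsumsq : 0 < ∑ i, v i ^ 2 := by
      have hex : ∃ i, v i ≠ 0 := by
        by_contra hcon
        push_neg at hcon
        exact hv (funext fun i => hcon i)
      obtain ⟨i0, hi0⟩ := hex
      have h1 : 0 < v i0 ^ 2 := (sq_nonneg (v i0)).lt_of_ne (Ne.symm (pow_ne_zero 2 hi0))
      exact Finset.sum_pos' (fun i _ => sq_nonneg _) ⟨i0, Finset.mem_univ i0, h1⟩
    rw [hform]
    have hlow : ∑ i, (1 + ε) * v i ^ 2 ≤ ∑ i, (1 + V i) * v i ^ 2 := by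
      refine Finset.sum_le_sum fun i _ => ?_
      exact mul_le_mul_of_nonneg_right (hVe i) (sq_nonneg _)
    have h2d : (2*(d:ℝ))⁻¹ * ∑ i, ∑ j, A i j * v i * v j ≤ ∑ i, v i ^ 2 := by
      calc (2*(d:ℝ))⁻¹ * ∑ i, ∑ j, A i j * v i * v j
          ≤ (2*(d:ℝ))⁻¹ * (2*(d:ℝ) * ∑ i, v i ^ 2) := by
            exact mul_le_mul_of_nonneg_left hAv (by positivity)
        _ = ∑ i, v i ^ 2 := by field_simp
    have hsum1 : ∑ i, (1 + ε) * v i ^ 2 = (1 + ε) * ∑ i, v i ^ 2 := by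
      rw [Finset.mul_sum]
    nlinarith
  -- G is positive semidefinite
  have hGquad : ∀ v : ι → ℝ, 0 ≤ v ⬝ᵥ (G *ᵥ v) := by
    intro v
    have hvu : H *ᵥ (G *ᵥ v) = v := by
      rw [Matrix.mulVec_mulVec, HG, Matrix.one_mulVec]
    rcases eq_or_ne (G *ᵥ v) 0 with h | h
    · rw [h]
      simp
    · have hpos := hHquadpos (G *ᵥ v) h
      rw [hvu] at hpos
      rw [dotProduct_comm] at hpos
      exact hpos.le
  -- Cauchy--Schwarz on entries of G
  have hCS : G x₀ x ^ 2 ≤ G x₀ x₀ * G x x := by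
    by_cases hxx : x₀ = x
    · subst hxx
      nlinarith [hGpos x₀ x₀]
    set vt : ℝ → ι → ℝ :=
      fun t i => t * (if i = x₀ then 1 else 0) + (if i = x then 1 else 0) with hvt
    have hvx₀ : ∀ t, vt t x₀ = t := by intro t; simp [hvt, hxx]
    have hvx : ∀ t, vt t x = 1 := by intro t; simp [hvt, Ne.symm hxx]
    have hquad : ∀ t : ℝ,
        vt t ⬝ᵥ (G *ᵥ vt t) = G x₀ x₀ * (t * t) + (2 * G x₀ x) * t + G x x := by
      intro t
      have h0 : vt t ⬝ᵥ (G *ᵥ vt t) = ∑ i, ∑ j, vt t i * (G i j * vt t j) := by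
        simp [dotProduct, Matrix.mulVec, Finset.mul_sum]
      rw [h0]
      have hptw : ∀ i j, vt t i * (G i j * vt t j)
          = (if j = x₀ then vt t i * (G i j * t) else 0)
            + (if j = x then vt t i * G i j else 0) := by
        intro i j
        by_cases h1 : j = x₀ <;> by_cases h2 : j = x
        · exact absurd (h1.symm.trans h2) hxx
        · simp [hvt, h1, h2, hxx]
        · simp [hvt, h1, h2, Ne.symm hxx]
        · simp [hvt, h1, h2]
      have h1 : ∀ i, ∑ j, vt t i * (G i j * vt t j)
          = vt t i * (G i x₀ * t) + vt t i * G i x := by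
        intro i
        rw [Finset.sum_congr rfl fun j _ => hptw i j, Finset.sum_add_distrib,
          Finset.sum_ite_eq' Finset.univ x₀ (fun j => vt t i * (G i j * t)),
          Finset.sum_ite_eq' Finset.univ x (fun j => vt t i * G i j)]
        simp
      rw [Finset.sum_congr rfl fun i _ => h1 i, Finset.sum_add_distrib]
      have hptw2 : ∀ i, vt t i * (G i x₀ * t)
          = (if i = x₀ then t * (G i x₀ * t) else 0) + (if i = x then G i x₀ * t else 0) := by
        intro i
        by_cases h1 : i = x₀ <;> by_cases h2 : i = x
        · exact absurd (h1.symm.trans h2) hxx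
        · simp [hvt, h1, h2, hxx]
        · simp [hvt, h1, h2, Ne.symm hxx]
        · simp [hvt, h1, h2]
      have hptw3 : ∀ i, vt t i * G i x
          = (if i = x₀ then t * G i x else 0) + (if i = x then G i x else 0) := by
        intro i
        by_cases h1 : i = x₀ <;> by_cases h2 : i = x
        · exact absurd (h1.symm.trans h2) hxx
        · simp [hvt, h1, h2, hxx]
        · simp [hvt, h1, h2, Ne.symm hxx]
        · simp [hvt, h1, h2]
      have h2 : ∑ i, vt t i * (G i x₀ * t) = t * (G x₀ x₀ * t) + G x x₀ * t := by
        rw [Finset.sum_congr rfl fun i _ => hptw2 i, Finset.sum_add_distrib,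
          Finset.sum_ite_eq' Finset.univ x₀ (fun i => t * (G i x₀ * t)),
          Finset.sum_ite_eq' Finset.univ x (fun i => G i x₀ * t)]
        simp
      have h3 : ∑ i, vt t i * G i x = t * G x₀ x + G x x := by
        rw [Finset.sum_congr rfl fun i _ => hptw3 i, Finset.sum_add_distrib,
          Finset.sum_ite_eq' Finset.univ x₀ (fun i => t * G i x),
          Finset.sum_ite_eq' Finset.univ x (fun i => G i x)]
        simp
      rw [h2, h3, hGs x x₀]
      ring
    have hdisc := discrim_le_zero (a := G x₀ x₀) (b := 2 * G x₀ x) (c := G x x)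
      (fun t => by rw [← hquad t]; exact hGquad (vt t))
    rw [discrim] at hdisc
    nlinarith
  -- rho is nonnegative
  set ρ : ℝ := Real.log (Real.sqrt (G x₀ x₀ * G x x) / G x₀ x) with hρdef
  have hsqrt_pos : 0 < Real.sqrt (G x₀ x₀ * G x x) :=
    Real.sqrt_pos.mpr (mul_pos (hGpos x₀ x₀) (hGpos x x))
  have hGle : G x₀ x ≤ Real.sqrt (G x₀ x₀ * G x x) := by
    rw [Real.le_sqrt (hGpos x₀ x).le (mul_pos (hGpos x₀ x₀) (hGpos x x)).le]
    exact hCS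
  have hρ0 : 0 ≤ ρ := by
    rw [hρdef]
    apply Real.log_nonneg
    rw [le_div_iff₀ (hGpos x₀ x), one_mul]
    exact hGle
  -- W and m
  set W : ℝ := P x₀ x with hWdef
  have hW0 : 0 < W := hPpos x₀ x
  set m : ℝ := max 0 (-Real.log W / c) with hmdef
  have hm0 : 0 ≤ m := le_max_left _ _
  have hem : Real.exp (-(c*m)) ≤ W := by
    by_cases hcase : -Real.log W / c ≤ 0
    · have hmz : m = 0 := by rw [hmdef]; exact max_eq_left hcase
      rw [hmz, mul_zero, neg_zero, Real.exp_zero]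
      have h1 : 0 ≤ Real.log W := by
        by_contra hcon
        push_neg at hcon
        have : 0 < -Real.log W / c := div_pos (by linarith) hc
        linarith
      calc (1:ℝ) = Real.exp 0 := Real.exp_zero.symm
        _ ≤ Real.exp (Real.log W) := Real.exp_le_exp.mpr h1
        _ = W := Real.exp_log hW0
    · push_neg at hcase
      have hmz : m = -Real.log W / c := by rw [hmdef]; exact max_eq_right hcase.le
      rw [hmz]
      have h1 : c * (-Real.log W / c) = -Real.log W := by
        field_simp
      rw [h1, neg_neg, Real.exp_log hW0]
  -- -log W ≤ ρ
  have hWρ : -Real.log W ≤ ρ := by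
    have hP00 : 1 ≤ e x₀ * G x₀ x₀ * e x₀ := by rw [← hPapp]; exact hPdiag x₀
    have hPxx : 1 ≤ e x * G x x * e x := by rw [← hPapp]; exact hPdiag x
    set a : ℝ := e x₀ * e x with hadef
    have ha0 : 0 < a := mul_pos (he0 x₀) (he0 x)
    have hGG : a⁻¹ * a⁻¹ ≤ G x₀ x₀ * G x x := by
      have h1 : 1 ≤ (e x₀ * G x₀ x₀ * e x₀) * (e x * G x x * e x) := by
        nlinarith [hGpos x₀ x₀, hGpos x x, he0 x₀, he0 x]
      have h2 : (1:ℝ) ≤ G x₀ x₀ * G x x * (a * a) := by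
        calc (1:ℝ) ≤ (e x₀ * G x₀ x₀ * e x₀) * (e x * G x x * e x) := h1
          _ = G x₀ x₀ * G x x * (a * a) := by rw [hadef]; ring
      calc a⁻¹ * a⁻¹ ≤ a⁻¹ * a⁻¹ * (G x₀ x₀ * G x x * (a * a)) := by
            nlinarith [mul_pos (inv_pos.mpr ha0) (inv_pos.mpr ha0)]
        _ = (G x₀ x₀ * G x x) * ((a⁻¹ * a) * (a⁻¹ * a)) := by ring
        _ = G x₀ x₀ * G x x := by rw [inv_mul_cancel₀ ha0.ne']; ring
    have hsqrta : a⁻¹ ≤ Real.sqrt (G x₀ x₀ * G x x) := by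
      rw [Real.le_sqrt (by positivity) (mul_pos (hGpos x₀ x₀) (hGpos x x)).le]
      calc a⁻¹ ^ 2 = a⁻¹ * a⁻¹ := sq (a⁻¹)
        _ ≤ G x₀ x₀ * G x x := hGG
    have hWinv : W⁻¹ ≤ Real.sqrt (G x₀ x₀ * G x x) / G x₀ x := by
      have hWa : W = a * G x₀ x := by rw [hWdef, hPapp, hadef]; ring
      have h2 : W⁻¹ = a⁻¹ / G x₀ x := by
        rw [hWa, mul_inv, div_eq_mul_inv]
      rw [h2]
      gcongr
      exact (hGpos x₀ x).le
    calc -Real.log W = Real.log W⁻¹ := (Real.log_inv W).symm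
      _ ≤ Real.log (Real.sqrt (G x₀ x₀ * G x x) / G x₀ x) :=
          Real.log_le_log (inv_pos.mpr hW0) hWinv
      _ = ρ := by rw [hρdef]
  have hmρ : m ≤ ρ / c := by
    rw [hmdef]
    apply max_le
    · exact div_nonneg hρ0 hc.le
    · gcongr
  -- geometric series bound
  have hgeo : ∀ n, ∑ k ∈ Finset.range n, Real.exp (c * (k + 1)) * (K ^ k) x₀ x ≤ C₁ := by
    intro n
    have hterm : ∀ k : ℕ, Real.exp (c * (k + 1)) * (K ^ k) x₀ x
        ≤ Real.exp c * Real.exp (-c) ^ k := by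
      intro k
      have hwk : (K ^ k) x₀ x ≤ r ^ k := pow_entry_le K r hK0 hKrow hr0 k x₀ x
      have h1 : Real.exp (c * (k + 1)) * (K ^ k) x₀ x ≤ Real.exp (c * (k + 1)) * r ^ k :=
        mul_le_mul_of_nonneg_left hwk (Real.exp_pos _).le
      have h2 : r = Real.exp (-(2*c)) := by
        rw [hrdef, hcdef, show -(2 * (Real.log (1+ε)/2)) = -Real.log (1+ε) from by ring,
          Real.exp_neg, Real.exp_log hε1]
      have h3 : Real.exp (c * (k + 1)) * r ^ k = Real.exp c * Real.exp (-c) ^ k := by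
        rw [h2, ← Real.exp_nat_mul, ← Real.exp_nat_mul, ← Real.exp_add, ← Real.exp_add]
        congr 1
        push_cast
        ring
      linarith
    calc ∑ k ∈ Finset.range n, Real.exp (c * (k+1)) * (K ^ k) x₀ x
        ≤ ∑ k ∈ Finset.range n, Real.exp c * Real.exp (-c) ^ k :=
          Finset.sum_le_sum fun k _ => hterm k
      _ = Real.exp c * ∑ k ∈ Finset.range n, Real.exp (-c) ^ k := by rw [Finset.mul_sum]
      _ ≤ Real.exp c * (1 - Real.exp (-c))⁻¹ :=
          mul_le_mul_of_nonneg_left (geo_partial _ (Real.exp_pos _).le hexpc n)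
            (Real.exp_pos _).le
      _ = C₁ := by rw [hC₁def]
  -- apply the key bound
  have hkey := key_bound K P r c m C₁ W Sb hr0 hr1 hK0 hKrow hP2 hP0 hPentry hSb0.le
      x₀ x hWdef hc hm0 hC₁0.le hgeo
  -- Schur-type pointwise inequality
  have hdiagH : H = Matrix.diagonal (fun i => 1 + V i) - (2*(d:ℝ))⁻¹ • A := by
    rw [hH]
    congr 1
    rw [← Matrix.diagonal_one, Matrix.diagonal_add]
  have hschurG : ∀ y, G x₀ y * G y x ≤ G y y * G x₀ x := by
    intro y
    refine schur_ineq H G (fun i => 1 + V i) ((2*(d:ℝ))⁻¹ • A) r hr0 hr1 hVi ?_ ?_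
      hdiagH HG hGpos x₀ y x
    · intro i j
      rw [Matrix.smul_apply, smul_eq_mul]
      have := hA0 i j
      positivity
    · intro i
      have h1 : ∑ j, ((2*(d:ℝ))⁻¹ • A) i j = (2*(d:ℝ))⁻¹ * ∑ j, A i j := by
        rw [Finset.mul_sum]
        exact Finset.sum_congr rfl fun j _ => by rw [Matrix.smul_apply, smul_eq_mul]
      rw [h1]
      have h2 : (2*(d:ℝ))⁻¹ * ∑ j, A i j ≤ (2*(d:ℝ))⁻¹ * (2*(d:ℝ)) :=
        mul_le_mul_of_nonneg_left (hArow i) (by positivity)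
      have h3 : (2*(d:ℝ))⁻¹ * (2*(d:ℝ)) = 1 := inv_mul_cancel₀ hd2.ne'
      have h4 : (1:ℝ) ≤ r * (1 + V i) := by
        rw [hrdef, inv_mul_eq_div, le_div_iff₀ hε1, one_mul]
        exact hVe i
      linarith
  have hschurP : ∀ y, P x₀ y * P y x ≤ P y y * W := by
    intro y
    have h := mul_le_mul_of_nonneg_left (hschurG y)
      (mul_nonneg (mul_nonneg (he0 x₀).le (he0 y).le) (mul_nonneg (he0 y).le (he0 x).le))
    calc P x₀ y * P y x = e x₀ * e y * (e y * e x) * (G x₀ y * G y x) := by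
          rw [hPapp, hPapp]; ring
      _ ≤ e x₀ * e y * (e y * e x) * (G y y * G x₀ x) := h
      _ = P y y * W := by rw [hPapp, hWdef, hPapp]; ring
  -- per-site bound
  have hstep : ∀ y, (G x₀ y * G y x / G x₀ x) ^ 2 ≤ Sb * (P x₀ y * P y x / W) := by
    intro y
    set q : ℝ := G x₀ y * G y x / G x₀ x with hqdef
    set qh : ℝ := P x₀ y * P y x / W with hqhdef
    have hq0 : 0 ≤ q := by
      rw [hqdef]
      exact div_nonneg (mul_nonneg (hGpos x₀ y).le (hGpos y x).le) (hGpos x₀ x).le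
    have hqh_eq : qh = (e y * e y) * q := by
      rw [hqhdef, hqdef, hPapp x₀ y, hPapp y x, hWdef, hPapp x₀ x]
      field_simp [(he0 x₀).ne', (he0 x).ne', (he0 y).ne', (hGpos x₀ x).ne']
    have hey1 : 1 ≤ e y * e y := by rw [he2' y]; linarith [hV y, hε]
    have hqqh : q ≤ qh := by rw [hqh_eq]; nlinarith
    have hqhSb : qh ≤ Sb := by
      rw [hqhdef, div_le_iff₀ hW0]
      calc P x₀ y * P y x ≤ P y y * W := hschurP y
        _ ≤ Sb * W := mul_le_mul_of_nonneg_right (hPentry y y) hW0.le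
    calc q ^ 2 ≤ qh ^ 2 := by nlinarith
      _ = qh * qh := sq qh
      _ ≤ Sb * qh := mul_le_mul_of_nonneg_right hqhSb (le_trans hq0 hqqh)
      _ = Sb * (P x₀ y * P y x / W) := by rw [hqhdef]
  -- assemble
  calc ∑ y, (G x₀ y * G y x / G x₀ x) ^ 2
      ≤ ∑ y, Sb * (P x₀ y * P y x / W) := Finset.sum_le_sum fun y _ => hstep y
    _ = Sb * ((P * P) x₀ x / W) := by
        rw [← Finset.mul_sum, ← Finset.sum_div, ← Matrix.mul_apply]
    _ ≤ Sb * (m + c⁻¹ * C₁) := by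
        apply mul_le_mul_of_nonneg_left _ hSb0.le
        rw [div_le_iff₀ hW0]
        calc (P*P) x₀ x ≤ m * W + c⁻¹ * Real.exp (-(c*m)) * C₁ := hkey
          _ ≤ m * W + c⁻¹ * W * C₁ := by
              have h5 : c⁻¹ * Real.exp (-(c*m)) * C₁ ≤ c⁻¹ * W * C₁ := by
                apply mul_le_mul_of_nonneg_right _ hC₁0.le
                exact mul_le_mul_of_nonneg_left hem (by positivity)
              linarith
          _ = (m + c⁻¹ * C₁) * W := by ring
    _ ≤ Sb * (ρ / c + c⁻¹ * C₁) := by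
        apply mul_le_mul_of_nonneg_left _ hSb0.le
        linarith [hmρ]
    _ ≤ Sb * (1 + C₁) / c * (ρ + 1) := by
        have hkey2 : ρ + C₁ ≤ (1 + C₁) * (ρ + 1) := by nlinarith [hρ0, hC₁0]
        have e1 : Sb * (ρ / c + c⁻¹ * C₁) = (Sb / c) * (ρ + C₁) := by
          field_simp
        have e2 : Sb * (1 + C₁) / c * (ρ + 1) = (Sb / c) * ((1 + C₁) * (ρ + 1)) := by ring
        rw [e1, e2]
        exact mul_le_mul_of_nonneg_left hkey2 (by positivity)
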